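/- Let a, b, c be real numbers with a ≠ 0 and b ≠ 0, and let F be the 4×4 real antisymmetric matrix with rows (0, a, 0, −a), (−a, 0, b, c), (0, −b, 0, b), (a, −c, −b, 0). Then det F = 0, the rank of F is 2, and the kernel of F is exactly two-dimensional, spanned by the vectors (b, 0, a, 0)ᵀ and (0, b, −c, b)ᵀ. -/

import Mathlib

open Matrix

/-- Let `a, b, c` be reals with `a ≠ 0` and `b ≠ 0`, and let `F` be the `4×4` real
antisymmetric matrix with rows `(0, a, 0, −a)`, `(−a, 0, b, c)`, `(0, −b, 0, b)`,
`(a, −c, −b, 0)` (the mass coefficient matrix of a type-1 symmetric 1+4 coorbital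
configuration).  Then `det F = 0`, `F` has rank `2`, and the kernel of `F` is exactly
two-dimensional, spanned by `(b, 0, a, 0)ᵀ` and `(0, b, −c, b)ᵀ`. -/
theorem type1_symmetric_one_plus_four_kernel (a b c : ℝ) (ha : a ≠ 0) (hb : b ≠ 0)
    (F : Matrix (Fin 4) (Fin 4) ℝ)
    (hF : F = !![0, a, 0, -a; -a, 0, b, c; 0, -b, 0, b; a, -c, -b, 0]) :
    F.det = 0 ∧ F.rank = 2 ∧
    LinearMap.ker F.mulVecLin =
      Submodule.span ℝ {![b, 0, a, 0], ![0, b, -c, b]} ∧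
    Module.finrank ℝ (LinearMap.ker F.mulVecLin) = 2 := by
  have hdet : F.det = 0 := by
    subst hF
    rw [Matrix.det_succ_row_zero]
    simp [Fin.sum_univ_succ, Matrix.det_fin_three]
    have h2 : (Fin.succAbove 3 2 : Fin 4) = 2 := rfl
    rw [h2]
    norm_num
    simp [Fin.succAbove, Fin.lt_def, Matrix.cons_val]
  have hker : LinearMap.ker F.mulVecLin =
      Submodule.span ℝ {![b, 0, a, 0], ![0, b, -c, b]} := by
    apply le_antisymm
    · intro x hx
      rw [LinearMap.mem_ker] at hx
      have h0 := congrFun hx 0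
      have h1 := congrFun hx 1
      simp [hF, Matrix.mulVecLin, Matrix.mulVec, dotProduct,
        Fin.sum_univ_four] at h0 h1
      rw [Submodule.mem_span_pair]
      refine ⟨(x 2 + c * x 1 / b) / a, x 1 / b, ?_⟩
      have hx13 : x 1 = x 3 := by
        have h : a * (x 1 - x 3) = 0 := by linarith [h0]
        rcases mul_eq_zero.mp h with h | h
        · exact absurd h ha
        · linarith
      rw [← hx13] at h1
      funext i
      fin_cases i
      · simp [Pi.smul_apply, smul_eq_mul]
        field_simp
        linear_combination h1
      · simp [Pi.smul_apply, smul_eq_mul]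
        field_simp
      · simp [Pi.smul_apply, smul_eq_mul]
        field_simp
        ring
      · simp [Pi.smul_apply, smul_eq_mul]
        field_simp
        linear_combination hx13
    · rw [Submodule.span_le]
      intro v hv
      simp only [Set.mem_insert_iff, Set.mem_singleton_iff] at hv
      rcases hv with h | h <;> subst h <;>
      · rw [SetLike.mem_coe, LinearMap.mem_ker]
        funext i
        fin_cases i <;>
          simp [hF, Matrix.mulVecLin, Matrix.mulVec, dotProduct,
            Fin.sum_univ_four] <;> ring
  have hindep : LinearIndependent ℝ ![![b, 0, a, 0], ![0, b, -c, b]] := by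
    rw [LinearIndependent.pair_iff]
    intro s t hst
    have h0 := congrFun hst 0
    have h1 := congrFun hst 1
    simp [Pi.smul_apply, smul_eq_mul] at h0 h1
    constructor
    · rcases h0 with h | h
      · exact h
      · exact absurd h hb
    · rcases h1 with h | h
      · exact h
      · exact absurd h hb
  have hrange : Set.range ![![b, 0, a, 0], ![0, b, -c, b]] =
      ({![b, 0, a, 0], ![0, b, -c, b]} : Set (Fin 4 → ℝ)) := by
    simp [Matrix.range_cons, Matrix.range_empty]
    rw [Set.pair_comm]
  have hfr : Module.finrank ℝ (LinearMap.ker F.mulVecLin) = 2 := by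
    rw [hker, ← hrange]
    rw [finrank_span_eq_card hindep]
    simp
  have hrank : F.rank = 2 := by
    have hrn := LinearMap.finrank_range_add_finrank_ker F.mulVecLin
    have hdom : Module.finrank ℝ (Fin 4 → ℝ) = 4 := by simp
    rw [hdom, hfr] at hrn
    rw [Matrix.rank]
    omega
  exact ⟨hdet, hrank, hker, hfr⟩
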